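/- Let ε > 0 be given and run Subgradient Descent with step-sizes α_i := ε/‖g_i‖² (with α_i := 0 if g_i = 0, in which case x^i is optimal), where every chosen subgradient satisfies ‖g_i‖ ≤ M. Then for every integer N ≥ M²·Dist(x⁰, Opt)²/ε² − 1 it holds that f_b^N ≤ f* + ε. -/

import Mathlib

open scoped RealInnerProductSpace Classical

/-- `p` is the Euclidean projection of `u` onto `Q`. -/
def IsProj {n : ℕ} (Q : Set (EuclideanSpace ℝ (Fin n)))
    (u p : EuclideanSpace ℝ (Fin n)) : Prop :=
  p ∈ Q ∧ ∀ w ∈ Q, dist p u ≤ dist w u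

lemma isProj_inner_le {n : ℕ} {Q : Set (EuclideanSpace ℝ (Fin n))} (hQcv : Convex ℝ Q)
    {u p : EuclideanSpace ℝ (Fin n)} (hp : IsProj Q u p)
    {w : EuclideanSpace ℝ (Fin n)} (hw : w ∈ Q) : ⟪u - p, w - p⟫ ≤ 0 := by
  obtain ⟨hpQ, hmin⟩ := hp
  by_contra h
  push_neg at h
  set s := ⟪u - p, w - p⟫ with hs
  set R := ‖w - p‖ ^ 2 with hR
  have hR0 : 0 ≤ R := by positivity
  have key : ∀ t : ℝ, 0 ≤ t → t ≤ 1 → 0 ≤ -2 * t * s + t ^ 2 * R := by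
    intro t ht0 ht1
    have hmem : p + t • (w - p) ∈ Q := by
      have hcv := hQcv hpQ hw (by linarith : (0:ℝ) ≤ 1 - t) ht0 (by ring)
      convert hcv using 1
      module
    have hd := hmin _ hmem
    rw [dist_eq_norm, dist_eq_norm] at hd
    have hsq : ‖p - u‖ ^ 2 ≤ ‖p + t • (w - p) - u‖ ^ 2 :=
      pow_le_pow_left₀ (norm_nonneg _) hd 2
    have hexpand : ‖p + t • (w - p) - u‖ ^ 2
        = ‖p - u‖ ^ 2 + 2 * t * ⟪p - u, w - p⟫ + t ^ 2 * R := by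
      have h1 : p + t • (w - p) - u = (p - u) + t • (w - p) := by abel
      rw [h1, norm_add_sq_real, real_inner_smul_right, norm_smul, Real.norm_eq_abs,
        mul_pow, sq_abs, hR]
      ring
    have h2 : ⟪p - u, w - p⟫ = -s := by
      rw [hs, show p - u = -(u - p) by abel, inner_neg_left]
    nlinarith [hsq, hexpand, h2]
  rcases le_or_gt R 0 with hRle | hRpos
  · have := key 1 zero_le_one le_rfl
    nlinarith
  · have ht : 0 < min 1 (s / R) := lt_min one_pos (div_pos h hRpos)
    have hk := key (min 1 (s / R)) ht.le (min_le_left _ _)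
    have htR : min 1 (s / R) * R ≤ s := by
      have hm : min 1 (s / R) ≤ s / R := min_le_right _ _
      calc min 1 (s / R) * R ≤ (s / R) * R := by nlinarith
        _ = s := by field_simp
    nlinarith [ht, hk, htR, h]

lemma isProj_sq_le {n : ℕ} {Q : Set (EuclideanSpace ℝ (Fin n))} (hQcv : Convex ℝ Q)
    {u p z : EuclideanSpace ℝ (Fin n)} (hp : IsProj Q u p) (hz : z ∈ Q) :
    ‖p - z‖ ^ 2 ≤ ‖u - z‖ ^ 2 := by
  have hz' := isProj_inner_le hQcv hp hz
  have hexp : ‖u - z‖ ^ 2 = ‖u - p‖ ^ 2 + 2 * ⟪u - p, p - z⟫ + ‖p - z‖ ^ 2 := by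
    have h : u - z = (u - p) + (p - z) := by abel
    rw [h, norm_add_sq_real]
  have h2 : ⟪u - p, p - z⟫ = -⟪u - p, z - p⟫ := by
    rw [← inner_neg_right]; congr 1; abel
  nlinarith [sq_nonneg ‖u - p‖]

set_option maxHeartbeats 2000000 in
/-- Subgradient Descent with constant-length step-size rule `α_i = ε/‖g_i‖²`. -/
theorem subgradient_descent_eps_step {n : ℕ} (Q : Set (EuclideanSpace ℝ (Fin n)))
    (hQne : Q.Nonempty) (hQcl : IsClosed Q) (hQcv : Convex ℝ Q)
    (f : EuclideanSpace ℝ (Fin n) → ℝ) (hfc : ConvexOn ℝ Q f)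
    (fstar : ℝ) (hattain : ∃ z ∈ Q, f z = fstar) (hmin : ∀ z ∈ Q, fstar ≤ f z)
    (ε M : ℝ) (hε : 0 < ε)
    (x g : ℕ → EuclideanSpace ℝ (Fin n)) (α : ℕ → ℝ)
    (hx0 : x 0 ∈ Q)
    (hsub : ∀ i, ∀ w ∈ Q, f (x i) + ⟪g i, w - x i⟫ ≤ f w)
    (hgM : ∀ i, ‖g i‖ ≤ M)
    (hα : ∀ i, α i = if g i = 0 then 0 else ε / ‖g i‖ ^ 2)
    (hupd : ∀ i, IsProj Q (x i - α i • g i) (x (i + 1)))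
    (N : ℕ)
    (hN : M ^ 2 * Metric.infDist (x 0) {z ∈ Q | f z = fstar} ^ 2 / ε ^ 2 - 1 ≤ (N : ℝ)) :
    (Finset.range (N + 1)).inf' Finset.nonempty_range_add_one (fun l => f (x l)) ≤ fstar + ε := by
  by_contra hcon
  push_neg at hcon
  set D := Metric.infDist (x 0) {z ∈ Q | f z = fstar} with hD
  set c := (Finset.range (N + 1)).inf' Finset.nonempty_range_add_one (fun l => f (x l))
      - (fstar + ε) with hcdef
  have hc : 0 < c := by rw [hcdef]; linarith
  clear_value D c
  have hinf_le : ∀ l, l ≤ N →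
      (Finset.range (N + 1)).inf' Finset.nonempty_range_add_one (fun l => f (x l)) ≤ f (x l) :=
    fun l hl => Finset.inf'_le _ (Finset.mem_range.mpr (by omega))
  have hflow : ∀ l, l ≤ N → fstar + ε + c ≤ f (x l) := by
    intro l hl
    have h1 := hinf_le l hl
    rw [hcdef]
    linarith
  obtain ⟨z₀, hz₀Q, hz₀f⟩ := hattain
  have hgne : ∀ l, l ≤ N → g l ≠ 0 := by
    intro l hl h0
    have h1 := hsub l z₀ hz₀Q
    rw [h0] at h1
    simp only [inner_zero_left] at h1
    have h2 := hflow l hl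
    rw [hz₀f] at h1
    linarith
  have hM : 0 < M := lt_of_lt_of_le (norm_pos_iff.mpr (hgne 0 (Nat.zero_le N))) (hgM 0)
  -- per-step decrease
  have hstep : ∀ z ∈ Q, f z = fstar → ∀ k, k ≤ N →
      ‖x (k + 1) - z‖ ^ 2 ≤ ‖x k - z‖ ^ 2 - ε * (ε + 2 * c) / M ^ 2 := by
    intro z hzQ hzf k hk
    have hg := hgne k hk
    have hG : 0 < ‖g k‖ := norm_pos_iff.mpr hg
    have hG2 : 0 < ‖g k‖ ^ 2 := by positivity
    have hαk : α k = ε / ‖g k‖ ^ 2 := by rw [hα k]; simp [hg]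
    have hsub' := hsub k z hzQ
    rw [hzf] at hsub'
    have hinner : ε + c ≤ ⟪g k, x k - z⟫ := by
      have h1 : ⟪g k, x k - z⟫ = -⟪g k, z - x k⟫ := by
        rw [← inner_neg_right]; congr 1; abel
      have h2 := hflow k hk
      rw [h1]
      linarith
    have hexp : ‖x k - α k • g k - z‖ ^ 2
        = ‖x k - z‖ ^ 2 - 2 * α k * ⟪g k, x k - z⟫ + α k ^ 2 * ‖g k‖ ^ 2 := by
      have h : x k - α k • g k - z = (x k - z) - α k • g k := by abel
      rw [h, norm_sub_sq_real, real_inner_smul_right, real_inner_comm, norm_smul,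
        Real.norm_eq_abs, mul_pow, sq_abs]
      ring
    have hproj := isProj_sq_le hQcv (hupd k) hzQ
    rw [hexp, hαk] at hproj
    have hkey : ε * (ε + 2 * c) / M ^ 2
        ≤ 2 * (ε / ‖g k‖ ^ 2) * ⟪g k, x k - z⟫ - (ε / ‖g k‖ ^ 2) ^ 2 * ‖g k‖ ^ 2 := by
      have he : 2 * (ε / ‖g k‖ ^ 2) * ⟪g k, x k - z⟫ - (ε / ‖g k‖ ^ 2) ^ 2 * ‖g k‖ ^ 2
          = ε * (2 * ⟪g k, x k - z⟫ - ε) / ‖g k‖ ^ 2 := by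
        field_simp
      rw [he]
      have hM2 : ‖g k‖ ^ 2 ≤ M ^ 2 := by nlinarith [hgM k, hG]
      have t1 : ε * (ε + 2 * c) * ‖g k‖ ^ 2 ≤ ε * (ε + 2 * c) * M ^ 2 :=
        mul_le_mul_of_nonneg_left hM2 (by positivity)
      have t2 : ε * (ε + 2 * c) ≤ ε * (2 * ⟪g k, x k - z⟫ - ε) := by nlinarith [hinner, hε, hc]
      have t3 : ε * (ε + 2 * c) * M ^ 2 ≤ ε * (2 * ⟪g k, x k - z⟫ - ε) * M ^ 2 :=
        mul_le_mul_of_nonneg_right t2 (by positivity)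
      rw [div_le_div_iff₀ (by positivity) (by positivity)]
      linarith
    linarith
  -- iterate
  have hiter : ∀ z ∈ Q, f z = fstar → ∀ k, k ≤ N + 1 →
      (k : ℝ) * (ε * (ε + 2 * c) / M ^ 2) ≤ ‖x 0 - z‖ ^ 2 - ‖x k - z‖ ^ 2 := by
    intro z hzQ hzf k
    induction k with
    | zero => intro _; simp
    | succ k ih =>
      intro hk
      have h1 := ih (by omega)
      have h2 := hstep z hzQ hzf k (by omega)
      push_cast
      linarith
  set A := ((N : ℝ) + 1) * (ε * (ε + 2 * c) / M ^ 2) with hA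
  clear_value A
  have hA0 : 0 ≤ A := by rw [hA]; positivity
  have hne : Set.Nonempty {z ∈ Q | f z = fstar} := ⟨z₀, hz₀Q, hz₀f⟩
  have hdistb : ∀ y ∈ {z ∈ Q | f z = fstar}, Real.sqrt A ≤ dist (x 0) y := by
    intro y hy
    obtain ⟨hyQ, hyf⟩ := hy
    have h1 := hiter y hyQ hyf (N + 1) le_rfl
    have h2 : A ≤ ‖x 0 - y‖ ^ 2 := by
      push_cast at h1
      nlinarith [sq_nonneg ‖x (N + 1) - y‖]
    rw [dist_eq_norm]
    calc Real.sqrt A ≤ Real.sqrt (‖x 0 - y‖ ^ 2) := Real.sqrt_le_sqrt h2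
      _ = ‖x 0 - y‖ := by rw [Real.sqrt_sq (norm_nonneg _)]
  have hsq : Real.sqrt A ≤ D := by
    rw [hD]
    by_contra h
    push_neg at h
    obtain ⟨y, hy, hlt⟩ := (Metric.infDist_lt_iff hne).mp h
    exact absurd hlt (not_lt.mpr (hdistb y hy))
  have hDbound : A ≤ D ^ 2 := by
    have h := pow_le_pow_left₀ (Real.sqrt_nonneg A) hsq 2
    rwa [Real.sq_sqrt hA0] at h
  have hD0 : 0 ≤ D := by rw [hD]; exact Metric.infDist_nonneg
  have hN' : M ^ 2 * D ^ 2 ≤ ((N : ℝ) + 1) * ε ^ 2 := by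
    have hε2 : 0 < ε ^ 2 := by positivity
    have h1 : M ^ 2 * D ^ 2 / ε ^ 2 ≤ (N : ℝ) + 1 := by linarith
    calc M ^ 2 * D ^ 2 = M ^ 2 * D ^ 2 / ε ^ 2 * ε ^ 2 := by field_simp
      _ ≤ ((N : ℝ) + 1) * ε ^ 2 := by nlinarith
  have hfin : ((N : ℝ) + 1) * (ε * (ε + 2 * c)) ≤ M ^ 2 * D ^ 2 := by
    have h1 := mul_le_mul_of_nonneg_left hDbound (le_of_lt (by positivity : (0:ℝ) < M ^ 2))
    calc ((N : ℝ) + 1) * (ε * (ε + 2 * c)) = M ^ 2 * A := by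
          rw [hA]; field_simp
      _ ≤ M ^ 2 * D ^ 2 := h1
  have hN1 : (1 : ℝ) ≤ (N : ℝ) + 1 := by
    have : (0:ℝ) ≤ (N : ℝ) := Nat.cast_nonneg N
    linarith
  have hpos : 0 < ((N : ℝ) + 1) * ε * c := by positivity
  nlinarith [hfin, hN', hpos]
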